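/- arXiv:1411.5501 — 2 statements merged into one kernel-verified Lean document; each statement's English description precedes it below -/
import Mathlib

section
/- Let N ≥ 1, let g : ℝ^N → ℝ and v : ℝ^N → ℝ^N both be of class C². Define the vector field w by w_j := Σ_{i=1}^N ∂_i g · (curl v)_{ij}. Then for all indices k, j and all x ∈ ℝ^N, (curl w)_{kj}(x) = Σ_i ∂_i g(x) ∂_i((curl v)_{kj})(x) + Σ_i (∂_i∂_k g(x) (curl v)_{ij}(x) − ∂_i∂_j g(x) (curl v)_{ik}(x)); that is, curl(∇g · curl v) = (∇g·∇)(curl v) + Hess(g)-commutator terms. -/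
open scoped BigOperators

/-- Partial derivative in the `i`-th coordinate direction on `ℝ^N`. -/
noncomputable def pd {N : ℕ} (i : Fin N) (f : (Fin N → ℝ) → ℝ) :
    (Fin N → ℝ) → ℝ :=
  fun x => fderiv ℝ f x (Pi.single i 1)

/-- Matrix-valued curl of a vector field: `(curl w)_{ij} = ∂_i w_j − ∂_j w_i`. -/
noncomputable def curlM {N : ℕ} (w : (Fin N → ℝ) → Fin N → ℝ) (i j : Fin N) :
    (Fin N → ℝ) → ℝ :=
  fun x => pd i (fun y => w y j) x - pd j (fun y => w y i) x

section helpers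

variable {N : ℕ}

lemma contDiff_pd {f : (Fin N → ℝ) → ℝ} (hf : ContDiff ℝ 2 f) (i : Fin N) :
    ContDiff ℝ 1 (pd i f) := by
  have h := hf.fderiv_right (m := 1) (by norm_num)
  exact h.clm_apply contDiff_const

lemma contDiff_comp_proj {v : (Fin N → ℝ) → Fin N → ℝ} (hv : ContDiff ℝ 2 v) (j : Fin N) :
    ContDiff ℝ 2 (fun y => v y j) :=
  (ContinuousLinearMap.proj j : (Fin N → ℝ) →L[ℝ] ℝ).contDiff.comp hv

lemma contDiff_curl {v : (Fin N → ℝ) → Fin N → ℝ} (hv : ContDiff ℝ 2 v) (i j : Fin N) :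
    ContDiff ℝ 1 (curlM v i j) :=
  (contDiff_pd (contDiff_comp_proj hv j) i).sub (contDiff_pd (contDiff_comp_proj hv i) j)

lemma pd_pd_eq {f : (Fin N → ℝ) → ℝ} (hf : ContDiff ℝ 2 f) (k i : Fin N) (x : Fin N → ℝ) :
    pd k (pd i f) x = fderiv ℝ (fderiv ℝ f) x (Pi.single k 1) (Pi.single i 1) := by
  have hdf : DifferentiableAt ℝ (fderiv ℝ f) x :=
    ((hf.fderiv_right (m := 1) (by norm_num)).differentiable (by norm_num)).differentiableAt
  show fderiv ℝ (fun y => fderiv ℝ f y (Pi.single i 1)) x (Pi.single k 1) = _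
  rw [fderiv_clm_apply hdf (differentiableAt_const _)]
  simp

lemma pd_comm {f : (Fin N → ℝ) → ℝ} (hf : ContDiff ℝ 2 f) (k i : Fin N) (x : Fin N → ℝ) :
    pd k (pd i f) x = pd i (pd k f) x := by
  rw [pd_pd_eq hf, pd_pd_eq hf]
  have hdf : DifferentiableAt ℝ (fderiv ℝ f) x :=
    ((hf.fderiv_right (m := 1) (by norm_num)).differentiable (by norm_num)).differentiableAt
  exact second_derivative_symmetric
    (fun y => ((hf.differentiable (by norm_num)) y).hasFDerivAt)
    hdf.hasFDerivAt _ _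

lemma pd_sub {f g : (Fin N → ℝ) → ℝ} {x : Fin N → ℝ} (hf : DifferentiableAt ℝ f x)
    (hg : DifferentiableAt ℝ g x) (k : Fin N) :
    pd k (fun y => f y - g y) x = pd k f x - pd k g x := by
  show fderiv ℝ (fun y => f y - g y) x _ = _
  rw [fderiv_fun_sub hf hg]
  rfl

lemma pd_curl {v : (Fin N → ℝ) → Fin N → ℝ} (hv : ContDiff ℝ 2 v) (k i j : Fin N)
    (x : Fin N → ℝ) :
    pd k (curlM v i j) x
      = pd k (pd i (fun y => v y j)) x - pd k (pd j (fun y => v y i)) x := by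
  have h1 : DifferentiableAt ℝ (pd i (fun y => v y j)) x :=
    ((contDiff_pd (contDiff_comp_proj hv j) i).differentiable (by norm_num)).differentiableAt
  have h2 : DifferentiableAt ℝ (pd j (fun y => v y i)) x :=
    ((contDiff_pd (contDiff_comp_proj hv i) j).differentiable (by norm_num)).differentiableAt
  exact pd_sub h1 h2 k

lemma curl_bianchi {v : (Fin N → ℝ) → Fin N → ℝ} (hv : ContDiff ℝ 2 v) (k i j : Fin N)
    (x : Fin N → ℝ) :
    pd k (curlM v i j) x - pd j (curlM v i k) x = pd i (curlM v k j) x := by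
  rw [pd_curl hv, pd_curl hv, pd_curl hv]
  rw [pd_comm (contDiff_comp_proj hv j) k i, pd_comm (contDiff_comp_proj hv i) k j,
    pd_comm (contDiff_comp_proj hv k) j i]
  ring

lemma pd_sum_mul {g : (Fin N → ℝ) → ℝ} {v : (Fin N → ℝ) → Fin N → ℝ}
    (hg : ContDiff ℝ 2 g) (hv : ContDiff ℝ 2 v) (k j : Fin N) (x : Fin N → ℝ) :
    pd k (fun y => ∑ i : Fin N, pd i g y * curlM v i j y) x
      = ∑ i : Fin N, (pd k (pd i g) x * curlM v i j x + pd i g x * pd k (curlM v i j) x) := by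
  have h : HasFDerivAt (fun y => ∑ i : Fin N, pd i g y * curlM v i j y)
      (∑ i : Fin N, (pd i g x • fderiv ℝ (curlM v i j) x
        + curlM v i j x • fderiv ℝ (pd i g) x)) x := by
    refine HasFDerivAt.fun_sum fun i _ => ?_
    exact (((contDiff_pd hg i).differentiable (by norm_num)) x).hasFDerivAt.mul
      (((contDiff_curl hv i j).differentiable (by norm_num)) x).hasFDerivAt
  show fderiv ℝ _ x (Pi.single k 1) = _
  rw [h.fderiv]
  simp only [ContinuousLinearMap.coe_sum', Finset.sum_apply, ContinuousLinearMap.add_apply,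
    ContinuousLinearMap.smul_apply, smul_eq_mul]
  refine Finset.sum_congr rfl fun i _ => ?_
  show pd i g x * pd k (curlM v i j) x + curlM v i j x * pd k (pd i g) x = _
  ring

end helpers

/-- curl(∇g · curl v)_{kj} = (∇g·∇)(curl v)_{kj}
      + Σ_i (∂_i∂_k g (curl v)_{ij} − ∂_i∂_j g (curl v)_{ik}). -/
theorem curl_gradg_dot_curl (N : ℕ) (hN : 1 ≤ N)
    (g : (Fin N → ℝ) → ℝ) (v : (Fin N → ℝ) → Fin N → ℝ)
    (hg : ContDiff ℝ 2 g) (hv : ContDiff ℝ 2 v) :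
    ∀ (k j : Fin N) (x : Fin N → ℝ),
      curlM (fun y j' => ∑ i : Fin N, pd i g y * curlM v i j' y) k j x
        = (∑ i : Fin N, pd i g x * pd i (curlM v k j) x)
          + ∑ i : Fin N,
              (pd i (pd k g) x * curlM v i j x - pd i (pd j g) x * curlM v i k x) := by
  intro k j x
  have expand : curlM (fun y j' => ∑ i : Fin N, pd i g y * curlM v i j' y) k j x
      = pd k (fun y => ∑ i : Fin N, pd i g y * curlM v i j y) x
        - pd j (fun y => ∑ i : Fin N, pd i g y * curlM v i k y) x := rfl
  rw [expand, pd_sum_mul hg hv, pd_sum_mul hg hv, ← Finset.sum_sub_distrib,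
    ← Finset.sum_add_distrib]
  refine Finset.sum_congr rfl fun i _ => ?_
  rw [pd_comm hg k i, pd_comm hg j i]
  have hb := curl_bianchi hv k i j x
  linear_combination (pd i g x) * hb
end

section
/- Let N ≥ 1, let ρ : ℝ × ℝ^N → ℝ and u : ℝ × ℝ^N → ℝ^N be of class C², and let f : ℝ → ℝ be of class C². Suppose the mass equation holds pointwise: ∂_t ρ + Σ_k ∂_k(ρ u_k) = 0 on ℝ × ℝ^N. Then for every index j and every (t,x), ∂_t(∂_j(f∘ρ))(t,x) + ∂_j( f'(ρ)·ρ·div u + Σ_k u_k ∂_k(f∘ρ) )(t,x) = 0, where div u := Σ_k ∂_k u_k and all ∂_j, ∂_k are spatial derivatives; that is, ∂_t ∇(f(ρ)) + ∇( f'(ρ)ρ div u + u·∇f(ρ) ) = 0. -/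
open scoped BigOperators

section Aux

open ContinuousLinearMap

variable {N : ℕ}

private lemma pd_eq_fderiv_prod {G : ℝ × (Fin N → ℝ) → ℝ} {t : ℝ} {x : Fin N → ℝ}
    (hG : DifferentiableAt ℝ G (t, x)) (j : Fin N) :
    pd j (fun y => G (t, y)) x = fderiv ℝ G (t, x) (0, Pi.single j 1) := by
  have h1 : HasFDerivAt (fun y : Fin N → ℝ => (t, y)) (inr ℝ ℝ (Fin N → ℝ)) x :=
    hasFDerivAt_prodMk_right t x
  have h2 := hG.hasFDerivAt.comp x h1
  simp only [Function.comp_def] at h2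
  simp [pd, h2.fderiv]

private lemma deriv_eq_fderiv_prod {G : ℝ × (Fin N → ℝ) → ℝ} {t : ℝ} {x : Fin N → ℝ}
    (hG : DifferentiableAt ℝ G (t, x)) :
    deriv (fun s => G (s, x)) t = fderiv ℝ G (t, x) (1, 0) := by
  have h1 : HasFDerivAt (fun s : ℝ => (s, x)) (inl ℝ ℝ (Fin N → ℝ)) t :=
    hasFDerivAt_prodMk_left t x
  have h2 := hG.hasFDerivAt.comp t h1
  simp only [Function.comp_def] at h2
  rw [h2.hasDerivAt.deriv]
  simp

/-- Clairaut–Schwarz for mixed time/space partials of a `C²` function on `ℝ × ℝ^N`. -/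
private lemma mixed_partials_comm {F : ℝ × (Fin N → ℝ) → ℝ} (hF : ContDiff ℝ 2 F)
    (j : Fin N) (t : ℝ) (x : Fin N → ℝ) :
    deriv (fun s => pd j (fun y => F (s, y)) x) t
      = pd j (fun y => deriv (fun s => F (s, y)) t) x := by
  have hd : ∀ p, DifferentiableAt ℝ F p := fun p =>
    (hF.differentiable (by norm_num)).differentiableAt
  have hfd : ContDiff ℝ 1 (fderiv ℝ F) := hF.fderiv_right (by norm_num)
  have h2 : HasFDerivAt (fderiv ℝ F) (fderiv ℝ (fderiv ℝ F) (t, x)) (t, x) :=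
    ((hfd.differentiable one_ne_zero) (t, x)).hasFDerivAt
  set A := fderiv ℝ (fderiv ℝ F) (t, x) with hA
  have hsymm : A (1, 0) (0, Pi.single j 1) = A (0, Pi.single j 1) (1, 0) :=
    (hF.contDiffAt.isSymmSndFDerivAt (by norm_num)) _ _
  have hL : deriv (fun s => pd j (fun y => F (s, y)) x) t = A (1, 0) (0, Pi.single j 1) := by
    have e1 : (fun s => pd j (fun y => F (s, y)) x)
        = fun s => fderiv ℝ F (s, x) (0, Pi.single j 1) := by
      funext s; exact pd_eq_fderiv_prod (hd _) j
    rw [e1]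
    have h1 : HasFDerivAt (fun s : ℝ => (s, x)) (inl ℝ ℝ (Fin N → ℝ)) t :=
      hasFDerivAt_prodMk_left t x
    have h3 := h2.comp t h1
    have h5 := (ContinuousLinearMap.apply ℝ ℝ
      ((0, Pi.single j 1) : ℝ × (Fin N → ℝ))).hasFDerivAt.comp t h3
    simp only [Function.comp_def, ContinuousLinearMap.apply_apply] at h5
    rw [h5.hasDerivAt.deriv]
    simp
  have hR : pd j (fun y => deriv (fun s => F (s, y)) t) x = A (0, Pi.single j 1) (1, 0) := by
    have e1 : (fun y => deriv (fun s => F (s, y)) t)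
        = fun y => fderiv ℝ F (t, y) (1, 0) := by
      funext y; exact deriv_eq_fderiv_prod (hd _)
    rw [e1]
    have h1 : HasFDerivAt (fun y : Fin N → ℝ => (t, y)) (inr ℝ ℝ (Fin N → ℝ)) x :=
      hasFDerivAt_prodMk_right t x
    have h3 := h2.comp x h1
    have h5 := (ContinuousLinearMap.apply ℝ ℝ
      ((1, 0) : ℝ × (Fin N → ℝ))).hasFDerivAt.comp x h3
    simp only [Function.comp_def, ContinuousLinearMap.apply_apply] at h5
    rw [pd, h5.fderiv]
    simp
  rw [hL, hR, hsymm]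

private lemma fderiv_real_apply {f : ℝ → ℝ} (a r : ℝ) : fderiv ℝ f a r = r * deriv f a := by
  rw [show r = r • (1:ℝ) by simp, map_smul, smul_eq_mul, smul_eq_mul, mul_one, fderiv_apply_one_eq_deriv]

private lemma pd_comp_scalar {f : ℝ → ℝ} {g : (Fin N → ℝ) → ℝ} {x : Fin N → ℝ}
    (hf : DifferentiableAt ℝ f (g x)) (hg : DifferentiableAt ℝ g x) (j : Fin N) :
    pd j (fun y => f (g y)) x = deriv f (g x) * pd j g x := by
  have := fderiv_comp x hf hg
  simp only [Function.comp_def] at this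
  simp only [pd, this, ContinuousLinearMap.comp_apply, fderiv_real_apply]
  ring

private lemma pd_mul {g h : (Fin N → ℝ) → ℝ} {x : Fin N → ℝ}
    (hg : DifferentiableAt ℝ g x) (hh : DifferentiableAt ℝ h x) (j : Fin N) :
    pd j (fun y => g y * h y) x = g x * pd j h x + h x * pd j g x := by
  simp [pd, fderiv_fun_mul hg hh, smul_eq_mul]

end Aux

/-- From the continuity equation, ∂_t ∇(f(ρ)) + ∇(f'(ρ)ρ div u + u·∇f(ρ)) = 0. -/
theorem time_derivative_grad_f_rho (N : ℕ) (hN : 1 ≤ N)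
    (ρ : ℝ → (Fin N → ℝ) → ℝ) (u : ℝ → (Fin N → ℝ) → Fin N → ℝ)
    (hρ : ContDiff ℝ 2 (fun p : ℝ × (Fin N → ℝ) => ρ p.1 p.2))
    (hu : ContDiff ℝ 2 (fun p : ℝ × (Fin N → ℝ) => u p.1 p.2))
    (f : ℝ → ℝ) (hf : ContDiff ℝ 2 f)
    (hmass : ∀ t x, deriv (fun s => ρ s x) t
        + ∑ k : Fin N, pd k (fun y => ρ t y * u t y k) x = 0) :
    ∀ (j : Fin N) (t : ℝ) (x : Fin N → ℝ),
      deriv (fun s => pd j (fun y => f (ρ s y)) x) t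
        + pd j (fun y =>
            deriv f (ρ t y) * ρ t y * (∑ k : Fin N, pd k (fun z => u t z k) y)
              + ∑ k : Fin N, u t y k * pd k (fun z => f (ρ t z)) y) x = 0 := by
  intro j t x
  -- basic regularity
  have hρt : ∀ t, ContDiff ℝ 2 (fun y => ρ t y) := fun t =>
    hρ.comp ((contDiff_const (c := t)).prodMk contDiff_id)
  have hρs : ∀ y, ContDiff ℝ 2 (fun s => ρ s y) := fun y =>
    hρ.comp (contDiff_id.prodMk (contDiff_const (c := y)))
  have hut : ∀ t k, ContDiff ℝ 2 (fun y => u t y k) := fun t k =>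
    contDiff_pi.mp (hu.comp ((contDiff_const (c := t)).prodMk contDiff_id)) k
  have hF : ContDiff ℝ 2 (fun p : ℝ × (Fin N → ℝ) => f (ρ p.1 p.2)) := hf.comp hρ
  -- pointwise identity for the bracket
  have key : ∀ y,
      deriv f (ρ t y) * ρ t y * (∑ k : Fin N, pd k (fun z => u t z k) y)
          + ∑ k : Fin N, u t y k * pd k (fun z => f (ρ t z)) y
        = - deriv (fun s => f (ρ s y)) t := by
    intro y
    have hdf : DifferentiableAt ℝ f (ρ t y) :=
      (hf.differentiable (by norm_num)).differentiableAt
    have hdρ : DifferentiableAt ℝ (fun z => ρ t z) y :=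
      ((hρt t).differentiable (by norm_num)).differentiableAt
    have hdu : ∀ k, DifferentiableAt ℝ (fun z => u t z k) y := fun k =>
      ((hut t k).differentiable (by norm_num)).differentiableAt
    have hdρs : DifferentiableAt ℝ (fun s => ρ s y) t :=
      ((hρs y).differentiable (by norm_num)).differentiableAt
    have h1 : deriv (fun s => f (ρ s y)) t
        = deriv f (ρ t y) * deriv (fun s => ρ s y) t := by
      have := deriv_comp t hdf hdρs
      simpa [Function.comp_def] using this
    have h2 : deriv (fun s => ρ s y) t
        = -∑ k : Fin N, pd k (fun z => ρ t z * u t z k) y := by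
      have := hmass t y; linarith
    have h3 : ∀ k : Fin N, pd k (fun z => ρ t z * u t z k) y
        = ρ t y * pd k (fun z => u t z k) y + u t y k * pd k (fun z => ρ t z) y :=
      fun k => pd_mul hdρ (hdu k) k
    have h4 : ∀ k : Fin N, pd k (fun z => f (ρ t z)) y
        = deriv f (ρ t y) * pd k (fun z => ρ t z) y :=
      fun k => pd_comp_scalar hdf hdρ k
    rw [h1, h2]
    simp only [h3, h4, Finset.sum_add_distrib, mul_neg, neg_neg, mul_add, Finset.mul_sum]
    congr 1
    · exact Finset.sum_congr rfl fun k _ => by ring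
    · exact Finset.sum_congr rfl fun k _ => by ring
  -- replace the bracket and use symmetry of second derivatives
  have e1 : (fun y =>
      deriv f (ρ t y) * ρ t y * (∑ k : Fin N, pd k (fun z => u t z k) y)
        + ∑ k : Fin N, u t y k * pd k (fun z => f (ρ t z)) y)
      = fun y => - deriv (fun s => f (ρ s y)) t := funext key
  rw [e1]
  have e2 : pd j (fun y => - deriv (fun s => f (ρ s y)) t) x
      = - pd j (fun y => deriv (fun s => f (ρ s y)) t) x := by
    simp [pd, fderiv_neg]
  rw [e2]
  have := mixed_partials_comm hF j t x
  simp only at this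
  rw [this]
  ring
end
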